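/- Suppose every trajectory of the system and every compatible trajectory coincide (T_c = T_G), meaning: for each t, (v_t, x_t, v_{t+1}, x_{t+1}) ∈ range([V_p; X_p; V_f; X_f]), and ker([V_p; X_p; V_f]) ⊆ ker(X_f), and A_U := X_f Ξ_{X_p} is Schur stable. Then for any true trajectory (v_t, x_t) of the system and any initial guess x̂_0, the estimates defined by x̂_{t+1} = X_f Ξ (v_t; x̂_t; v_{t+1}) satisfy x_t − x̂_t = A_U^t (x_0 − x̂_0) → 0 as t → ∞. -/

import Mathlib

open Matrix Filter

/-- A real matrix is Schur stable if all its complex eigenvalues have modulus < 1. -/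
def SchurStable {n : ℕ} (A : Matrix (Fin n) (Fin n) ℝ) : Prop :=
  ∀ μ ∈ spectrum ℂ (A.map (algebraMap ℝ ℂ)), ‖μ‖ < 1

/-- The stacked data matrix [V_p; X_p; V_f]. -/
def stack3M {mp n Nc : ℕ} (Vp : Matrix (Fin mp) (Fin Nc) ℝ)
    (Xp : Matrix (Fin n) (Fin Nc) ℝ) (Vf : Matrix (Fin mp) (Fin Nc) ℝ) :
    Matrix (Fin mp ⊕ (Fin n ⊕ Fin mp)) (Fin Nc) ℝ :=
  Matrix.of fun i j => Sum.elim (fun a => Vp a j) (Sum.elim (fun a => Xp a j) (fun a => Vf a j)) i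

/-- The stacked vector (v_t; x_t; v_{t+1}). -/
def stack3V {mp n : ℕ} (v₁ : Fin mp → ℝ) (x : Fin n → ℝ) (v₂ : Fin mp → ℝ) :
    Fin mp ⊕ (Fin n ⊕ Fin mp) → ℝ :=
  Sum.elim v₁ (Sum.elim x v₂)

section Aux

open scoped NNReal ENNReal

attribute [local instance] Matrix.linftyOpNormedRing Matrix.linftyOpNormedAlgebra

lemma aux_norm_pow_tendsto_zero {n : ℕ} [NeZero n] (B : Matrix (Fin n) (Fin n) ℂ)
    (h : ∀ μ ∈ spectrum ℂ B, ‖μ‖ < 1) :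
    Tendsto (fun t => ‖B ^ t‖) atTop (nhds 0) := by
  haveI : Nontrivial (Matrix (Fin n) (Fin n) ℂ) := by infer_instance
  haveI : CompleteSpace (Matrix (Fin n) (Fin n) ℂ) := FiniteDimensional.complete ℂ _
  have hr : spectralRadius ℂ B < ((1 : ℝ≥0) : ℝ≥0∞) :=
    spectrum.spectralRadius_lt_of_forall_lt B (fun z hz => by
      rw [← NNReal.coe_lt_coe, coe_nnnorm]; simpa using h z hz)
  obtain ⟨c, hc1, hc2⟩ := ENNReal.lt_iff_exists_nnreal_btwn.mp hr
  have hgel := spectrum.pow_nnnorm_pow_one_div_tendsto_nhds_spectralRadius B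
  have hev : ∀ᶠ t : ℕ in atTop, ((‖B ^ t‖₊ : ℝ≥0∞)) ^ (1/(t:ℝ)) < (c : ℝ≥0∞) :=
    hgel.eventually_lt_const hc1
  have hc1' : (c : ℝ) < 1 := by exact_mod_cast hc2
  have key : ∀ᶠ t : ℕ in atTop, ‖B ^ t‖ ≤ (c : ℝ) ^ t := by
    filter_upwards [hev, eventually_ge_atTop 1] with t ht ht1
    have htne : (t : ℝ) ≠ 0 := by positivity
    have := ENNReal.rpow_le_rpow ht.le (by positivity : (0:ℝ) ≤ (t:ℝ))
    rw [← ENNReal.rpow_mul, one_div, inv_mul_cancel₀ htne, ENNReal.rpow_one,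
      ENNReal.rpow_natCast, ← ENNReal.coe_pow, ENNReal.coe_le_coe] at this
    calc ‖B ^ t‖ = ((‖B ^ t‖₊ : ℝ≥0) : ℝ) := (coe_nnnorm _).symm
      _ ≤ ((c ^ t : ℝ≥0) : ℝ) := by exact_mod_cast this
      _ = (c : ℝ) ^ t := by push_cast; ring
  have h0 : Tendsto (fun t : ℕ => (c:ℝ) ^ t) atTop (nhds 0) :=
    tendsto_pow_atTop_nhds_zero_of_lt_one c.coe_nonneg hc1'
  exact squeeze_zero' (.of_forall fun t => norm_nonneg _) key h0

lemma aux_entry_tendsto_zero {n : ℕ} (B : Matrix (Fin n) (Fin n) ℂ)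
    (h : ∀ μ ∈ spectrum ℂ B, ‖μ‖ < 1) (i j : Fin n) :
    Tendsto (fun t => ‖(B ^ t) i j‖) atTop (nhds 0) := by
  haveI : NeZero n := ⟨(Fin.pos i).ne'⟩
  have hb : ∀ t : ℕ, ‖(B ^ t) i j‖ ≤ ‖B ^ t‖ := by
    intro t
    have : ‖(B ^ t) i j‖₊ ≤ ‖B ^ t‖₊ := by
      rw [Matrix.linfty_opNNNorm_def]
      refine le_trans ?_ (Finset.le_sup (Finset.mem_univ i))
      exact Finset.single_le_sum (f := fun k => ‖(B ^ t) i k‖₊) (fun k _ => zero_le) (Finset.mem_univ j)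
    exact_mod_cast this
  exact squeeze_zero (fun t => norm_nonneg _) hb (aux_norm_pow_tendsto_zero B h)

end Aux

/-- under compatibility of the true trajectory with the data,
the kernel condition, and Schur stability of A_U = X_f Ξ_{X_p}, the estimates
x̂_{t+1} = X_f Ξ (v_t; x̂_t; v_{t+1}) satisfy x_t − x̂_t = A_U^t (x_0 − x̂_0) → 0. -/
theorem stmt9 {mp n Nc : ℕ}
    (Vp Vf : Matrix (Fin mp) (Fin Nc) ℝ) (Xp Xf : Matrix (Fin n) (Fin Nc) ℝ)
    (M : Matrix (Fin mp ⊕ (Fin n ⊕ Fin mp)) (Fin Nc) ℝ) (hM : M = stack3M Vp Xp Vf)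
    (Ξ : Matrix (Fin Nc) (Fin mp ⊕ (Fin n ⊕ Fin mp)) ℝ)
    (hΞ : M * Ξ * M = M ∧ Ξ * M * Ξ = Ξ ∧ (M * Ξ)ᵀ = M * Ξ ∧ (Ξ * M)ᵀ = Ξ * M)
    (ΞXp : Matrix (Fin Nc) (Fin n) ℝ) (hΞXp : ∀ i a, ΞXp i a = Ξ i (Sum.inr (Sum.inl a)))
    (hker : ∀ g : Fin Nc → ℝ, M.mulVec g = 0 → Xf.mulVec g = 0)
    (AU : Matrix (Fin n) (Fin n) ℝ) (hAU : AU = Xf * ΞXp)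
    (hSchur : SchurStable AU)
    (v : ℕ → Fin mp → ℝ) (x : ℕ → Fin n → ℝ)
    (htraj : ∀ t : ℕ, ∃ g : Fin Nc → ℝ,
      M.mulVec g = stack3V (v t) (x t) (v (t + 1)) ∧ Xf.mulVec g = x (t + 1))
    (xhat : ℕ → Fin n → ℝ)
    (hxhat : ∀ t, xhat (t + 1) = Xf.mulVec (Ξ.mulVec (stack3V (v t) (xhat t) (v (t + 1))))) :
    (∀ t, x t - xhat t = (AU ^ t).mulVec (x 0 - xhat 0)) ∧
      Tendsto (fun t => x t - xhat t) atTop (nhds 0) := by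
  -- the true trajectory satisfies the same recursion
  have hx : ∀ t, x (t + 1) = Xf.mulVec (Ξ.mulVec (stack3V (v t) (x t) (v (t + 1)))) := by
    intro t
    obtain ⟨g, hg1, hg2⟩ := htraj t
    have hMg : M.mulVec (Ξ.mulVec (M.mulVec g)) = M.mulVec g := by
      rw [Matrix.mulVec_mulVec, Matrix.mulVec_mulVec, hΞ.1]
    have hker' : Xf.mulVec (Ξ.mulVec (M.mulVec g) - g) = 0 := by
      apply hker
      rw [Matrix.mulVec_sub, hMg, sub_self]
    rw [Matrix.mulVec_sub, sub_eq_zero] at hker'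
    rw [← hg1, hker', hg2]
  -- one-step error recursion
  have hstep : ∀ t, x (t + 1) - xhat (t + 1) = AU.mulVec (x t - xhat t) := by
    intro t
    rw [hx t, hxhat t, ← Matrix.mulVec_sub, ← Matrix.mulVec_sub]
    have hsub : stack3V (v t) (x t) (v (t + 1)) - stack3V (v t) (xhat t) (v (t + 1))
        = stack3V 0 (x t - xhat t) 0 := by
      funext i
      rcases i with i | i | i <;> simp [stack3V]
    rw [hsub]
    have hXi : Ξ.mulVec (stack3V 0 (x t - xhat t) 0) = ΞXp.mulVec (x t - xhat t) := by
      funext k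
      simp only [Matrix.mulVec, dotProduct, Fintype.sum_sum_type, stack3V]
      simp [hΞXp]
    rw [hXi, Matrix.mulVec_mulVec, hAU]
  -- the closed form
  have hform : ∀ t, x t - xhat t = (AU ^ t).mulVec (x 0 - xhat 0) := by
    intro t
    induction t with
    | zero => simp [Matrix.mulVec_one]
    | succ t ih =>
        rw [hstep t, ih, Matrix.mulVec_mulVec, ← pow_succ']
  refine ⟨hform, ?_⟩
  -- convergence
  have hB : ∀ μ ∈ spectrum ℂ ((AU).map (algebraMap ℝ ℂ)), ‖μ‖ < 1 := hSchur
  have hentry : ∀ i j, Tendsto (fun t => (AU ^ t) i j) atTop (nhds 0) := by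
    intro i j
    have h1 := aux_entry_tendsto_zero _ hB i j
    have hmap : ∀ t : ℕ, ((AU.map (algebraMap ℝ ℂ)) ^ t) i j = ((AU ^ t) i j : ℝ) := by
      intro t
      have : (AU.map (algebraMap ℝ ℂ)) ^ t = (AU ^ t).map (algebraMap ℝ ℂ) := by
        simpa using (map_pow ((algebraMap ℝ ℂ).mapMatrix) AU t).symm
      rw [this]; simp [Matrix.map_apply]
    simp only [hmap, Complex.norm_real] at h1
    exact tendsto_zero_iff_norm_tendsto_zero.mpr (by simpa using h1)
  have : Tendsto (fun t => (AU ^ t).mulVec (x 0 - xhat 0)) atTop (nhds 0) := by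
    rw [tendsto_pi_nhds]
    intro i
    have : Tendsto (fun t => ∑ j, (AU ^ t) i j * (x 0 - xhat 0) j) atTop (nhds 0) := by
      have := tendsto_finset_sum (Finset.univ : Finset (Fin n))
        (fun j _ => (hentry i j).mul_const ((x 0 - xhat 0) j))
      simpa using this
    simpa [Matrix.mulVec, dotProduct] using this
  exact this.congr (fun t => (hform t).symm)
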